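/- Let μ > 0, κ ≥ 0, σ > 0, n ≥ 1 an integer, and let (pₙ(t), qₙ(t)) solve the linear system pₙ' = nπ qₙ, qₙ' = −nπ(1+σn²π²)pₙ − (μn²π²+κ)qₙ + (βₙ/(nπ)) f(t), where βₙ = √2((−1)ⁿ−1) and f ∈ L²(0,T). Define Pₙ(t) = (1/2)n²π²qₙ(t)² + n²π²(1+σn²π²)pₙ(t)² + (1/2)n²π²(qₙ(t) + ((μn²π²+κ)/(nπ))pₙ(t))². Then for a.e. t ∈ (0,T): Pₙ'(t) = −(μn²π²+κ)n²π²qₙ(t)² − (1+σn²π²)(μn²π²+κ)n²π²pₙ(t)² + nπβₙ(2qₙ(t) + ((μn²π²+κ)/(nπ))pₙ(t))f(t). -/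

import Mathlib

open MeasureTheory Set

/-- The modal Lyapunov functional Pₙ for the n-th Fourier mode
(pₙ, qₙ) of the closed-loop tank-liquid system. -/
noncomputable def Pmod (μ κ σ : ℝ) (n : ℕ) (p q : ℝ → ℝ) (t : ℝ) : ℝ :=
  (1/2) * (n:ℝ)^2 * Real.pi^2 * (q t)^2
    + (n:ℝ)^2 * Real.pi^2 * (1 + σ * (n:ℝ)^2 * Real.pi^2) * (p t)^2
    + (1/2) * (n:ℝ)^2 * Real.pi^2
        * (q t + ((μ * (n:ℝ)^2 * Real.pi^2 + κ) / ((n:ℝ) * Real.pi)) * p t)^2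

/-- exact derivative identity for the modal Lyapunov functional
along solutions of pₙ' = nπqₙ, qₙ' = −nπ(1+σn²π²)pₙ − (μn²π²+κ)qₙ + (βₙ/(nπ))f. -/
theorem Pmod_derivative (μ κ σ T : ℝ) (n : ℕ) (p q f : ℝ → ℝ)
    (hμ : 0 < μ) (hκ : 0 ≤ κ) (hσ : 0 < σ) (hT : 0 < T) (hn : 1 ≤ n)
    (hf : MemLp f 2 (volume.restrict (Ioo (0:ℝ) T)))
    (hp : ∀ t ∈ Icc (0:ℝ) T, HasDerivAt p ((n:ℝ) * Real.pi * q t) t)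
    (hq : ∀ᵐ t ∂(volume.restrict (Ioo (0:ℝ) T)), HasDerivAt q
      (-(n:ℝ) * Real.pi * (1 + σ * (n:ℝ)^2 * Real.pi^2) * p t
        - (μ * (n:ℝ)^2 * Real.pi^2 + κ) * q t
        + (Real.sqrt 2 * ((-1:ℝ)^n - 1) / ((n:ℝ) * Real.pi)) * f t) t) :
    ∀ᵐ t ∂(volume.restrict (Ioo (0:ℝ) T)),
      HasDerivAt (Pmod μ κ σ n p q)
        (-(μ * (n:ℝ)^2 * Real.pi^2 + κ) * (n:ℝ)^2 * Real.pi^2 * (q t)^2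
          - (1 + σ * (n:ℝ)^2 * Real.pi^2) * (μ * (n:ℝ)^2 * Real.pi^2 + κ)
              * (n:ℝ)^2 * Real.pi^2 * (p t)^2
          + (n:ℝ) * Real.pi * (Real.sqrt 2 * ((-1:ℝ)^n - 1))
              * (2 * q t + ((μ * (n:ℝ)^2 * Real.pi^2 + κ) / ((n:ℝ) * Real.pi)) * p t)
              * f t) t := by
  have hmem : ∀ᵐ t ∂(volume.restrict (Ioo (0:ℝ) T)), t ∈ Ioo (0:ℝ) T :=
    ae_restrict_mem measurableSet_Ioo
  filter_upwards [hq, hmem] with t hqd htmem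
  have hnπ : (n:ℝ) * Real.pi ≠ 0 := by
    have hn0 : (0:ℝ) < n := by exact_mod_cast Nat.lt_of_lt_of_le Nat.zero_lt_one hn
    positivity
  have hpd := hp t (Ioo_subset_Icc_self htmem)
  have hβ : HasDerivAt q
      (-(n:ℝ) * Real.pi * (1 + σ * (n:ℝ)^2 * Real.pi^2) * p t
        - (μ * (n:ℝ)^2 * Real.pi^2 + κ) * q t
        + (Real.sqrt 2 * ((-1:ℝ)^n - 1) / ((n:ℝ) * Real.pi)) * f t) t := hqd
  have hq2 : HasDerivAt (fun s => (q s)^2)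
      (2 * q t * (-(n:ℝ) * Real.pi * (1 + σ * (n:ℝ)^2 * Real.pi^2) * p t
        - (μ * (n:ℝ)^2 * Real.pi^2 + κ) * q t
        + (Real.sqrt 2 * ((-1:ℝ)^n - 1) / ((n:ℝ) * Real.pi)) * f t)) t := by
    have h0 := hβ.pow 2
    exact h0.congr_deriv (by ring)
  have hp2 : HasDerivAt (fun s => (p s)^2)
      (2 * p t * ((n:ℝ) * Real.pi * q t)) t := by
    have h0 := hpd.pow 2
    exact h0.congr_deriv (by ring)
  have hmixd : HasDerivAt (fun s => (q s + ((μ * (n:ℝ)^2 * Real.pi^2 + κ) / ((n:ℝ) * Real.pi)) * p s)^2)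
      (2 * (q t + ((μ * (n:ℝ)^2 * Real.pi^2 + κ) / ((n:ℝ) * Real.pi)) * p t)
        * ((-(n:ℝ) * Real.pi * (1 + σ * (n:ℝ)^2 * Real.pi^2) * p t
        - (μ * (n:ℝ)^2 * Real.pi^2 + κ) * q t
        + (Real.sqrt 2 * ((-1:ℝ)^n - 1) / ((n:ℝ) * Real.pi)) * f t)
          + ((μ * (n:ℝ)^2 * Real.pi^2 + κ) / ((n:ℝ) * Real.pi)) * ((n:ℝ) * Real.pi * q t))) t := by
    have h0 := (hβ.add (hpd.const_mul ((μ * (n:ℝ)^2 * Real.pi^2 + κ) / ((n:ℝ) * Real.pi)))).pow 2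
    exact h0.congr_deriv (by simp only [Pi.add_apply]; ring)
  have hfinal := ((hq2.const_mul ((1/2) * (n:ℝ)^2 * Real.pi^2)).add
      (hp2.const_mul ((n:ℝ)^2 * Real.pi^2 * (1 + σ * (n:ℝ)^2 * Real.pi^2)))).add
      (hmixd.const_mul ((1/2) * (n:ℝ)^2 * Real.pi^2))
  have heq : Pmod μ κ σ n p q = fun s =>
      (1/2) * (n:ℝ)^2 * Real.pi^2 * (q s)^2
        + (n:ℝ)^2 * Real.pi^2 * (1 + σ * (n:ℝ)^2 * Real.pi^2) * (p s)^2
        + (1/2) * (n:ℝ)^2 * Real.pi^2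
            * (q s + ((μ * (n:ℝ)^2 * Real.pi^2 + κ) / ((n:ℝ) * Real.pi)) * p s)^2 := rfl
  rw [heq]
  refine hfinal.congr_deriv ?_
  field_simp
  ring
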